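/- The functor L : Set → CondSet, sending a set Y to the condensed set LocConst(−, Y) of locally constant maps, is left adjoint to the underlying set functor U : CondSet → Set sending a condensed set X to X(*), with unit at a set Y given by the bijection sending y ∈ Y to the constant map * → Y; consequently L is fully faithful and naturally isomorphic to the constant sheaf functor Set → CondSet. -/
import Mathlib


universe u

open CategoryTheory Limits

/-- The functor `L : Set ⥤ CondSet`, sending a set `Y` to the condensed set `LocConst(−, Y)` of
locally constant maps, is left adjoint to the underlying set functor `U : CondSet ⥤ Set` sending
a condensed set `X` to `X(*)`, with unit at a set `Y` given by the map sending `y ∈ Y` to the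
corresponding constant map; consequently `L` is fully faithful and naturally isomorphic to the
constant sheaf functor `Set ⥤ CondSet`. -/
theorem locallyConstant_adjunction_unit_const_and_fullyFaithful_and_iso_discrete :
    (∃ (adj : CondensedSet.LocallyConstant.functor.{u} ⊣ Condensed.underlying (Type (u + 1))),
      ∀ (Y : Type (u + 1)) (y : Y), adj.unit.app Y y = LocallyConstant.const _ y) ∧
    CondensedSet.LocallyConstant.functor.{u}.Full ∧
    CondensedSet.LocallyConstant.functor.{u}.Faithful ∧
    Nonempty (CondensedSet.LocallyConstant.functor.{u} ≅ Condensed.discrete (Type (u + 1))) := by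
  refine ⟨⟨CompHausLike.LocallyConstant.adjunction _ _, fun Y y ↦ rfl⟩,
    inferInstance, inferInstance, ⟨CondensedSet.LocallyConstant.iso⟩⟩
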